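/- arXiv:1505.02910 — 4 statements merged into one kernel-verified Lean document; each statement's English description precedes it below -/
import Mathlib

section
/- Let m be even and F' = {f_1, f_2} with f_1 ≡ 1 and f_2 ≡ 0 constant functions on a set Z_m of m points. Then the permutational Rademacher complexity Q_{m,m/2}(F', Z_m) = 0, while the conditional Rademacher complexity satisfies 1/√(2m) ≤ R_m(F', Z_m) ≤ 2/√m. -/
open Finset
open scoped Classical

/-- Average of `f` over a finite set. -/
noncomputable def favg {α : Type*} (f : α → ℝ) (S : Finset α) : ℝ :=
  (∑ x ∈ S, f x) / S.card

/-- Real-valued sign of a Boolean sign: `+1` for `true`, `−1` for `false`. -/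
def bsgn (b : Bool) : ℝ := if b then 1 else -1

/-- Permutational Rademacher complexity of a finite nonempty class `F` of
functions on the `m`-point set `Fin m`, with split parameter `n`. -/
noncomputable def PRCu {m : ℕ} (F : Finset (Fin m → ℝ)) (hF : F.Nonempty)
    (n : ℕ) : ℝ :=
  (1 / (m.choose n : ℝ)) *
    ∑ S ∈ (Finset.univ : Finset (Fin m)).powersetCard n,
      F.sup' hF fun f => favg f (Finset.univ \ S) - favg f S

/-- Conditional Rademacher complexity of a finite nonempty class `F` of
functions on `Fin m`. -/
noncomputable def Rad {m : ℕ} (F : Finset (Fin m → ℝ)) (hF : F.Nonempty) : ℝ :=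
  (∑ ε : Fin m → Bool,
      F.sup' hF fun f => (2 / (m : ℝ)) * ∑ i, bsgn (ε i) * f i) / 2 ^ m


lemma cb_rec (n : ℕ) : ((n:ℝ)+1) * Nat.centralBinom (n+1) = 2*(2*n+1) * Nat.centralBinom n := by
  have := Nat.succ_mul_centralBinom_succ n
  exact_mod_cast congrArg (Nat.cast : ℕ → ℝ) this

lemma cb_lower (n : ℕ) (hn : 1 ≤ n) :
    (4:ℝ)^n ≤ 2 * Real.sqrt n * Nat.centralBinom n := by
  induction n with
  | zero => omega
  | succ k ih =>
    rcases Nat.eq_or_lt_of_le hn with h1 | h1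
    · -- k + 1 = 1
      have hk : k = 0 := by omega
      subst hk
      norm_num [Nat.centralBinom]
    · have hk1 : 1 ≤ k := by omega
      have IH := ih hk1
      set a := Real.sqrt k with ha
      set b := Real.sqrt (k+1) with hb
      have ha0 : 0 ≤ a := Real.sqrt_nonneg _
      have hb0 : 0 ≤ b := Real.sqrt_nonneg _
      have haa : a * a = k := Real.mul_self_sqrt (by positivity)
      have hbb : b * b = (k:ℝ)+1 := by
        rw [hb]; rw [show ((k:ℕ):ℝ)+1 = ((k:ℝ)+1) from rfl]
        exact_mod_cast Real.mul_self_sqrt (by positivity)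
      have key : 2 * a * b ≤ 2*(k:ℝ)+1 := by
        have h1 : a * b = Real.sqrt (k * (k+1)) := by
          rw [ha, hb, ← Real.sqrt_mul (by positivity)]
        have h2 : Real.sqrt ((k:ℝ) * (k+1)) ≤ ((2*(k:ℝ)+1)/2) := by
          rw [show ((2*(k:ℝ)+1)/2) = Real.sqrt (((2*(k:ℝ)+1)/2)^2) from
            (Real.sqrt_sq (by positivity)).symm]
          apply Real.sqrt_le_sqrt
          nlinarith
        nlinarith
      have hrec := cb_rec k
      set c := (Nat.centralBinom k : ℝ) with hc
      set C := (Nat.centralBinom (k+1) : ℝ) with hC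
      have hc0 : (0:ℝ) < c := by rw [hc]; exact_mod_cast Nat.centralBinom_pos k
      have hC0 : (0:ℝ) < C := by rw [hC]; exact_mod_cast Nat.centralBinom_pos (k+1)
      have step1 : 2 * a * ((k:ℝ)+1) ≤ (2*(k:ℝ)+1) * b := by nlinarith
      have main : ((k:ℝ)+1) * (4:ℝ)^(k+1) ≤ ((k:ℝ)+1) * (2 * b * C) := by
        have e1 : ((k:ℝ)+1) * (2 * b * C) = 2 * b * (2*(2*k+1) * c) := by
          rw [← hrec]; ring
        rw [e1]
        have : ((k:ℝ)+1) * (4:ℝ)^(k+1) = 4*((k:ℝ)+1) * (4:ℝ)^k := by ring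
        rw [this]
        calc 4*((k:ℝ)+1) * (4:ℝ)^k ≤ 4*((k:ℝ)+1) * (2 * a * c) := by
              apply mul_le_mul_of_nonneg_left IH (by positivity)
          _ = (2 * a * ((k:ℝ)+1)) * (4 * c) := by ring
          _ ≤ ((2*(k:ℝ)+1) * b) * (4 * c) := by
              apply mul_le_mul_of_nonneg_right step1 (by positivity)
          _ = 2 * b * (2*(2*↑k+1) * c) := by ring
      have hpos : (0:ℝ) < (k:ℝ)+1 := by positivity
      have := le_of_mul_le_mul_left (by linarith [main] : ((k:ℝ)+1) * (4:ℝ)^(k+1) ≤ ((k:ℝ)+1) * (2 * b * C)) hpos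
      calc (4:ℝ)^(k+1) ≤ 2 * b * C := this
        _ = 2 * Real.sqrt ((k:ℕ)+1 : ℕ) * C := by push_cast [hb]; ring_nf


lemma cb_upper (n : ℕ) :
    (Nat.centralBinom n : ℝ) * Real.sqrt (3*n+1) ≤ 4^n := by
  induction n with
  | zero => norm_num [Nat.centralBinom]
  | succ k IH =>
    set u := Real.sqrt (3*(k:ℝ)+4) with hu
    set v := Real.sqrt (3*(k:ℝ)+1) with hv
    have hu0 : 0 ≤ u := Real.sqrt_nonneg _
    have hv0 : 0 ≤ v := Real.sqrt_nonneg _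
    have key : (2*(k:ℝ)+1) * u ≤ 2*((k:ℝ)+1) * v := by
      have l1 : (2*(k:ℝ)+1) * u = Real.sqrt ((2*(k:ℝ)+1)^2 * (3*k+4)) := by
        rw [hu, Real.sqrt_mul (by positivity), Real.sqrt_sq (by positivity)]
      have l2 : 2*((k:ℝ)+1) * v = Real.sqrt ((2*((k:ℝ)+1))^2 * (3*k+1)) := by
        rw [hv, Real.sqrt_mul (by positivity), Real.sqrt_sq (by positivity)]
      rw [l1, l2]
      apply Real.sqrt_le_sqrt
      nlinarith [sq_nonneg ((k:ℝ))]
    have hrec := cb_rec k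
    set c := (Nat.centralBinom k : ℝ) with hc
    set C := (Nat.centralBinom (k+1) : ℝ) with hC
    have hc0 : (0:ℝ) ≤ c := by rw [hc]; positivity
    have IH' : c * v ≤ 4^k := IH
    have hgoal' : ((k:ℝ)+1) * (C * u) ≤ ((k:ℝ)+1) * 4^(k+1) := by
      calc ((k:ℝ)+1) * (C * u) = (((k:ℝ)+1) * C) * u := by ring
        _ = 2*(2*k+1) * c * u := by rw [hrec]
        _ = (2*c) * ((2*(k:ℝ)+1) * u) := by ring
        _ ≤ (2*c) * (2*((k:ℝ)+1) * v) := by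
            apply mul_le_mul_of_nonneg_left key (by positivity)
        _ = 4*((k:ℝ)+1) * (c * v) := by ring
        _ ≤ 4*((k:ℝ)+1) * 4^k := by
            apply mul_le_mul_of_nonneg_left IH' (by positivity)
        _ = ((k:ℝ)+1) * 4^(k+1) := by ring
    have hpos : (0:ℝ) < (k:ℝ)+1 := by positivity
    have h2 : C * u ≤ 4^(k+1) := le_of_mul_le_mul_left hgoal' hpos
    calc C * Real.sqrt (3*((k:ℕ)+1:ℕ)+1) = C * u := by
          rw [hu]; congr 2; push_cast; ring
      _ ≤ 4^(k+1) := h2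

lemma telescope_term (n j : ℕ) (hn : 1 ≤ n) :
    ((2*n).choose (n+j) : ℝ) * (2*j) =
      2*n * ((2*n-1).choose (n-1+j) : ℝ) - 2*n * ((2*n-1).choose (n-1+(j+1)) : ℝ) := by
  set m' := 2*n-1 with hm'
  have h2n : 2*n = m'+1 := by omega
  have hnj : n+j = (n-1+j)+1 := by omega
  have pascal : ((2*n).choose (n+j) : ℝ)
      = (m'.choose (n-1+j) : ℝ) + (m'.choose (n-1+j+1) : ℝ) := by
    rw [h2n, hnj]
    exact_mod_cast congrArg (Nat.cast : ℕ → ℝ) (Nat.choose_succ_succ m' (n-1+j))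
  have succmul : (2*n : ℝ) * (m'.choose (n-1+j) : ℝ)
      = ((2*n).choose (n+j) : ℝ) * ((n:ℝ)+j) := by
    have h := Nat.add_one_mul_choose_eq m' (n-1+j)
    have hcast : ((m'+1 : ℕ):ℝ) * (m'.choose (n-1+j) : ℝ)
        = ((m'+1).choose (n-1+j+1) : ℝ) * ((n-1+j+1 : ℕ) : ℝ) := by
      exact_mod_cast congrArg (Nat.cast : ℕ → ℝ) h
    rw [← h2n, ← hnj] at hcast
    have e1 : ((2*n : ℕ) : ℝ) = 2*(n:ℝ) := by push_cast; ring
    have e2 : ((n+j : ℕ) : ℝ) = (n:ℝ)+j := by push_cast; ring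
    rw [e1, e2] at hcast
    linarith [hcast]
  have e3 : n-1+(j+1) = n-1+j+1 := by omega
  rw [e3]
  set A := (m'.choose (n-1+j) : ℝ)
  set B := (m'.choose (n-1+j+1) : ℝ)
  set C := ((2*n).choose (n+j) : ℝ)
  have hB : B = C - A := by linarith [pascal]
  rw [hB]
  nlinarith [succmul]

lemma Dsum_eval (n : ℕ) (hn : 1 ≤ n) :
    ∑ k ∈ range (2*n+1), ((2*n).choose k : ℝ) * max (2*(k:ℝ) - 2*n) 0
      = n * Nat.centralBinom n := by
  have hsplit := Finset.sum_Ico_consecutive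
    (fun k => ((2*n).choose k : ℝ) * max (2*(k:ℝ) - 2*n) 0)
    (Nat.zero_le n) (by omega : n ≤ 2*n+1)
  rw [Finset.range_eq_Ico, ← hsplit]
  have h1 : ∑ k ∈ Ico 0 n, ((2*n).choose k : ℝ) * max (2*(k:ℝ) - 2*n) 0 = 0 := by
    apply Finset.sum_eq_zero
    intro k hk
    rw [mem_Ico] at hk
    have : max (2*(k:ℝ) - 2*n) 0 = 0 := by
      apply max_eq_right
      have : (k:ℝ) < n := by exact_mod_cast hk.2
      linarith
    rw [this, mul_zero]
  rw [h1, zero_add]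
  rw [Finset.sum_Ico_eq_sum_range]
  have hrange : 2*n+1-n = n+1 := by omega
  rw [hrange]
  have hterm : ∀ j ∈ range (n+1),
      ((2*n).choose (n+j) : ℝ) * max (2*((n+j:ℕ):ℝ) - 2*n) 0
      = (fun j => 2*(n:ℝ) * ((2*n-1).choose (n-1+j) : ℝ)) j
        - (fun j => 2*(n:ℝ) * ((2*n-1).choose (n-1+j) : ℝ)) (j+1) := by
    intro j _
    have hmax : max (2*((n+j:ℕ):ℝ) - 2*n) 0 = 2*j := by
      rw [max_eq_left] <;> push_cast <;> [ring; linarith [Nat.cast_nonneg (α := ℝ) j]]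
    rw [hmax]
    exact telescope_term n j hn
  rw [Finset.sum_congr rfl hterm, Finset.sum_range_sub']
  have hz : (2*n-1).choose (n-1+(n+1)) = 0 :=
    Nat.choose_eq_zero_of_lt (by omega)
  rw [hz]
  have hcb : Nat.centralBinom n = 2 * (2*n-1).choose (n-1) := by
    have hp : (2*n).choose n = (2*n-1).choose (n-1) + (2*n-1).choose n := by
      have h := Nat.choose_succ_succ (2*n-1) (n-1)
      rw [show (2*n-1).succ = 2*n by omega, show (n-1).succ = n by omega] at h
      exact h
    have hsym : (2*n-1).choose n = (2*n-1).choose (n-1) := by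
      have := Nat.choose_symm (n := 2*n-1) (k := n-1) (by omega)
      rw [show 2*n-1-(n-1) = n by omega] at this
      exact this
    rw [Nat.centralBinom, hp, hsym]; ring
  simp only [Nat.add_zero, Nat.cast_zero, mul_zero, sub_zero]
  rw [hcb]
  push_cast
  ring

set_option maxHeartbeats 1000000 in
/-- For the two-element class of constant functions `{1, 0}`, the PRC is
zero while the Rademacher complexity lies between `1/√(2m)` and `2/√m`. -/
theorem PRC_zero_Rad_bounds {m : ℕ} (hm : 0 < m) (hme : Even m) :
    PRCu ({fun _ => (1 : ℝ), fun _ => (0 : ℝ)} : Finset (Fin m → ℝ))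
        (Finset.insert_nonempty _ _) (m / 2) = 0 ∧
    1 / Real.sqrt (2 * m)
        ≤ Rad ({fun _ => (1 : ℝ), fun _ => (0 : ℝ)} : Finset (Fin m → ℝ))
            (Finset.insert_nonempty _ _) ∧
    Rad ({fun _ => (1 : ℝ), fun _ => (0 : ℝ)} : Finset (Fin m → ℝ))
        (Finset.insert_nonempty _ _) ≤ 2 / Real.sqrt m := by
  classical
  obtain ⟨r, hr⟩ := hme
  have hm2 : m = 2 * r := by omega
  have hr1 : 1 ≤ r := by omega
  set f1 : Fin m → ℝ := fun _ => 1 with hf1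
  set f0 : Fin m → ℝ := fun _ => 0 with hf0
  have hF : ({f1, f0} : Finset (Fin m → ℝ)).Nonempty := Finset.insert_nonempty _ _
  have hsup : ∀ g : (Fin m → ℝ) → ℝ,
      ∀ h : ({f1,f0} : Finset (Fin m → ℝ)).Nonempty,
      ({f1,f0} : Finset (Fin m → ℝ)).sup' h g = max (g f1) (g f0) := by
    intro g h
    apply le_antisymm
    · apply Finset.sup'_le
      intro f hf
      rw [Finset.mem_insert, Finset.mem_singleton] at hf
      rcases hf with rfl | rfl
      · exact le_max_left _ _
      · exact le_max_right _ _
    · apply max_le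
      · exact Finset.le_sup' g (Finset.mem_insert_self _ _)
      · exact Finset.le_sup' g (by simp)
  have hfavg1 : ∀ T : Finset (Fin m), T.card ≠ 0 → favg f1 T = 1 := by
    intro T hT
    unfold favg
    rw [show (∑ x ∈ T, f1 x) = (T.card : ℝ) by simp [hf1]]
    rw [div_self (by exact_mod_cast hT)]
  have hfavg0 : ∀ T : Finset (Fin m), favg f0 T = 0 := by
    intro T; unfold favg; simp [hf0]
  constructor
  · -- PRC = 0
    unfold PRCu
    rw [mul_eq_zero]; right
    apply Finset.sum_eq_zero
    intro S hS
    rw [Finset.mem_powersetCard] at hS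
    have hcS : S.card = m/2 := hS.2
    have hcS' : S.card ≠ 0 := by omega
    have hcomp : (Finset.univ \ S).card = m - m/2 := by
      rw [Finset.card_sdiff_of_subset (Finset.subset_univ S), Finset.card_univ, Fintype.card_fin, hcS]
    have hcomp' : (Finset.univ \ S).card ≠ 0 := by omega
    rw [hsup]
    rw [hfavg1 S hcS', hfavg1 _ hcomp', hfavg0, hfavg0]
    norm_num
  · -- Rad value
    have hsum_bsgn : ∀ ε : Fin m → Bool,
        (∑ i, bsgn (ε i)) = 2*((Finset.univ.filter fun x => ε x = true).card : ℝ) - m := by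
      intro ε
      have hb : ∀ i, bsgn (ε i) = 2*(if ε i = true then (1:ℝ) else 0) - 1 := by
        intro i; cases ε i <;> norm_num [bsgn]
      rw [Finset.sum_congr rfl (fun i _ => hb i), Finset.sum_sub_distrib, ← Finset.mul_sum,
        Finset.sum_boole, Finset.sum_const, Finset.card_univ, Fintype.card_fin]
      simp
    have hRad : Rad ({f1,f0} : Finset (Fin m → ℝ)) (Finset.insert_nonempty _ _)
        = (Nat.centralBinom r : ℝ) / 4^r := by
      unfold Rad
      have hterm : ∀ ε : Fin m → Bool,
          ({f1,f0} : Finset (Fin m → ℝ)).sup'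
              (Finset.insert_nonempty _ _)
              (fun f => (2 / (m : ℝ)) * ∑ i, bsgn (ε i) * f i)
          = max ((2/(m:ℝ)) * ∑ i, bsgn (ε i)) 0 := by
        intro ε
        rw [hsup]
        congr 1
        · simp [hf1]
        · simp [hf0]
      rw [Finset.sum_congr rfl (fun ε _ => hterm ε)]
      have hbij : (∑ ε : Fin m → Bool, max ((2/(m:ℝ)) * ∑ i, bsgn (ε i)) 0)
          = ∑ A ∈ (Finset.univ : Finset (Fin m)).powerset,
              max ((2/(m:ℝ)) * (2*(A.card:ℝ) - m)) 0 := by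
        apply Finset.sum_nbij'
          (fun ε => Finset.univ.filter (fun x => ε x = true))
          (fun A => (fun x => decide (x ∈ A)))
        · intro ε _; simp
        · intro A _; simp
        · intro ε _; funext x; simp
        · intro A _; ext x; simp
        · intro ε _
          rw [hsum_bsgn ε]
      rw [hbij]
      rw [Finset.sum_powerset_apply_card
        (fun k : ℕ => max ((2/(m:ℝ)) * (2*(k:ℝ) - m)) 0)]
      have hcu : (Finset.univ : Finset (Fin m)).card = m := by
        rw [Finset.card_univ, Fintype.card_fin]
      rw [hcu]
      have hmpos : (0:ℝ) < (m:ℝ) := by exact_mod_cast hm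
      have hfac : ∀ k : ℕ, (m.choose k) • max ((2/(m:ℝ)) * (2*(k:ℝ) - m)) 0
          = (2/(m:ℝ)) * ((m.choose k : ℝ) * max (2*(k:ℝ) - 2*r) 0) := by
        intro k
        rw [nsmul_eq_mul]
        have h1 : max ((2/(m:ℝ)) * (2*(k:ℝ) - m)) 0
            = (2/(m:ℝ)) * max (2*(k:ℝ) - m) 0 := by
          rw [mul_max_of_nonneg _ _ (by positivity), mul_zero]
        rw [h1]
        have h2 : ((m:ℝ)) = 2*(r:ℝ) := by rw [hm2]; push_cast; ring
        rw [h2]; ring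
      rw [Finset.sum_congr rfl (fun k _ => hfac k), ← Finset.mul_sum]
      have hrange : m + 1 = 2*r + 1 := by omega
      rw [hrange, show m.choose = (2*r).choose by rw [hm2]]
      rw [Dsum_eval r hr1]
      have h2m : (2:ℝ)^m = 4^r := by
        rw [hm2, pow_mul]; norm_num
      rw [h2m]
      have : (2/(m:ℝ)) * ((r:ℝ) * Nat.centralBinom r) = (Nat.centralBinom r : ℝ) := by
        rw [hm2]
        have hrpos : (0:ℝ) < (r:ℝ) := by exact_mod_cast hr1
        field_simp
        push_cast
        ring
      rw [this]
    rw [hRad]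
    have hrpos : (0:ℝ) < (r:ℝ) := by exact_mod_cast hr1
    have hsr : (0:ℝ) < Real.sqrt r := Real.sqrt_pos.mpr hrpos
    have h4 : (0:ℝ) < 4^r := by positivity
    have hCB : (0:ℝ) < (Nat.centralBinom r : ℝ) := by exact_mod_cast Nat.centralBinom_pos r
    constructor
    · -- lower bound
      have h2m : Real.sqrt (2*(m:ℝ)) = 2 * Real.sqrt r := by
        rw [show (2*(m:ℝ)) = (2:ℝ)^2 * r by rw [hm2]; push_cast; ring,
          Real.sqrt_mul (by positivity), Real.sqrt_sq (by norm_num)]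
      rw [h2m, div_le_div_iff₀ (by positivity) h4]
      have := cb_lower r hr1
      nlinarith [this]
    · -- upper bound
      have hsm : Real.sqrt (m:ℝ) = Real.sqrt (2*(r:ℝ)) := by
        rw [hm2]; push_cast; ring_nf
      have hsmpos : (0:ℝ) < Real.sqrt (m:ℝ) := Real.sqrt_pos.mpr (by exact_mod_cast hm)
      rw [div_le_div_iff₀ h4 hsmpos]
      have hmono : Real.sqrt (m:ℝ) ≤ Real.sqrt (3*(r:ℝ)+1) := by
        rw [hsm]; apply Real.sqrt_le_sqrt; linarith
      have hub := cb_upper r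
      calc (Nat.centralBinom r : ℝ) * Real.sqrt (m:ℝ)
          ≤ (Nat.centralBinom r : ℝ) * Real.sqrt (3*(r:ℝ)+1) := by
            apply mul_le_mul_of_nonneg_left hmono (le_of_lt hCB)
        _ ≤ 4^r := hub
        _ ≤ 2 * 4^r := by linarith
end

section
/- Let m be even, Z_m a set of m points, and let F'' consist of all binom(m, m/2) functions whose restriction to Z_m is a {0,1}-valued vector with exactly m/2 ones. Then Q_{m,m/2}(F'', Z_m) = 1 and R_m(F'', Z_m) = 1 − 2^{−m} · binom(m, m/2). -/
open Finset
open scoped Classical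

/-- The class of all `{0,1}`-valued functions on `Fin m` with exactly `m/2`
ones. -/
noncomputable def Fdd (m : ℕ) : Finset (Fin m → ℝ) :=
  ((Finset.univ : Finset (Fin m)).powersetCard (m / 2)).image
    fun S i => if i ∈ S then (1 : ℝ) else 0

theorem Fdd_nonempty (m : ℕ) : (Fdd m).Nonempty :=
  Finset.Nonempty.image
    ((Finset.powersetCard_nonempty).2 (by simpa using Nat.div_le_self m 2)) _

lemma mem_Fdd {m : ℕ} {f : Fin m → ℝ} :
    f ∈ Fdd m ↔ ∃ T : Finset (Fin m), T.card = m / 2 ∧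
      f = fun i => if i ∈ T then (1 : ℝ) else 0 := by
  simp only [Fdd, Finset.mem_image, Finset.mem_powersetCard_univ]
  constructor
  · rintro ⟨T, hT, rfl⟩; exact ⟨T, hT, rfl⟩
  · rintro ⟨T, hT, rfl⟩; exact ⟨T, hT, rfl⟩

lemma sum_ind {m : ℕ} (T S : Finset (Fin m)) :
    ∑ x ∈ S, (if x ∈ T then (1 : ℝ) else 0) = ((S ∩ T).card : ℝ) := by
  rw [Finset.sum_ite_mem]
  simp

/-- The inner sup in the PRC is `1` for every half-size subset `S`. -/
lemma sup'_prc {m : ℕ} (hm : 0 < m) (hme : Even m) (S : Finset (Fin m))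
    (hS : S.card = m / 2) :
    (Fdd m).sup' (Fdd_nonempty m)
      (fun f => favg f (Finset.univ \ S) - favg f S) = 1 := by
  obtain ⟨h, rfl⟩ := hme
  have hmm : h + h = 2 * h := by ring
  have hh : 0 < h := by omega
  have hhalf : (h + h) / 2 = h := by omega
  have hcS : ((Finset.univ : Finset (Fin (h + h))) \ S).card = h := by
    rw [Finset.card_sdiff_of_subset (Finset.subset_univ S), Finset.card_univ, Fintype.card_fin]
    omega
  apply le_antisymm
  · apply Finset.sup'_le
    intro f hf
    obtain ⟨T, hT, rfl⟩ := mem_Fdd.1 hf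
    have h1 : favg (fun i => if i ∈ T then (1 : ℝ) else 0) (Finset.univ \ S) ≤ 1 := by
      rw [favg, sum_ind, hcS]
      rw [div_le_one (by exact_mod_cast hh)]
      have : ((Finset.univ \ S) ∩ T).card ≤ (Finset.univ \ S).card :=
        Finset.card_le_card Finset.inter_subset_left
      rw [hcS] at this
      exact_mod_cast this
    have h2 : (0 : ℝ) ≤ favg (fun i => if i ∈ T then (1 : ℝ) else 0) S := by
      rw [favg, sum_ind]
      positivity
    linarith
  · have hmem : (fun i => if i ∈ (Finset.univ \ S) then (1 : ℝ) else 0) ∈ Fdd (h + h) := by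
      rw [mem_Fdd]
      exact ⟨Finset.univ \ S, by rw [hcS]; omega, rfl⟩
    refine le_trans ?_ (Finset.le_sup' _ hmem)
    have e1 : favg (fun i => if i ∈ (Finset.univ \ S) then (1 : ℝ) else 0)
        (Finset.univ \ S) = 1 := by
      rw [favg, sum_ind, Finset.inter_self, hcS, div_self]
      exact_mod_cast hh.ne'
    have e2 : favg (fun i => if i ∈ (Finset.univ \ S) then (1 : ℝ) else 0) S = 0 := by
      rw [favg, sum_ind]
      have : S ∩ (Finset.univ \ S) = ∅ := by
        ext x; simp
      rw [this]
      simp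
    rw [e1, e2]; norm_num

lemma sum_bsgn {m : ℕ} (ε : Fin m → Bool) (T : Finset (Fin m)) :
    ∑ i, bsgn (ε i) * (if i ∈ T then (1 : ℝ) else 0)
      = 2 * ((T ∩ Finset.univ.filter (fun i => ε i)).card : ℝ) - T.card := by
  have e0 : ∀ i : Fin m, bsgn (ε i) * (if i ∈ T then (1 : ℝ) else 0)
      = if i ∈ T then bsgn (ε i) else 0 := by
    intro i; by_cases hi : i ∈ T <;> simp [hi]
  rw [Finset.sum_congr rfl (fun i _ => e0 i), Finset.sum_ite_mem, Finset.univ_inter]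
  rw [← Finset.sum_filter_add_sum_filter_not T (fun i => ε i = true)]
  have hT1 : ∀ i ∈ T.filter (fun i => ε i = true), bsgn (ε i) = 1 := by
    intro i hi; simp only [Finset.mem_filter] at hi; simp [bsgn, hi.2]
  have hT2 : ∀ i ∈ T.filter (fun i => ¬ ε i = true), bsgn (ε i) = -1 := by
    intro i hi; simp only [Finset.mem_filter] at hi; simp [bsgn, hi.2]
  rw [Finset.sum_congr rfl hT1, Finset.sum_congr rfl hT2]
  rw [Finset.sum_const, Finset.sum_const]
  have hinter : T ∩ Finset.univ.filter (fun i => ε i) = T.filter (fun i => ε i = true) := by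
    ext x; simp
  have hcard := Finset.card_filter_add_card_filter_not
    (s := T) (p := fun i => ε i = true)
  rw [hinter]
  have : ((T.filter (fun i => ε i = true)).card : ℝ)
      + ((T.filter (fun i => ¬ ε i = true)).card : ℝ) = T.card := by exact_mod_cast hcard
  simp only [nsmul_eq_mul, mul_one, mul_neg_one]
  linarith [this]

/-- The inner sup in the Rademacher complexity. -/
lemma sup'_rad {m : ℕ} (hm : 0 < m) (hme : Even m) (ε : Fin m → Bool) :
    (Fdd m).sup' (Fdd_nonempty m)
        (fun f => (2 / (m : ℝ)) * ∑ i, bsgn (ε i) * f i)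
      = (2 / (m : ℝ)) *
          (2 * ((min (m / 2) (Finset.univ.filter (fun i => ε i)).card : ℕ) : ℝ)
            - ((m / 2 : ℕ) : ℝ)) := by
  set E := Finset.univ.filter (fun i : Fin m => ε i) with hE
  set h := m / 2 with hh
  have hhm : h ≤ m := Nat.div_le_self m 2
  have h2m : (0 : ℝ) < 2 / (m : ℝ) := by positivity
  apply le_antisymm
  · apply Finset.sup'_le
    intro f hf
    obtain ⟨T, hT, rfl⟩ := mem_Fdd.1 hf
    rw [← hh] at hT
    rw [sum_bsgn]
    have hle : (T ∩ E).card ≤ min h E.card := by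
      apply le_min
      · rw [← hT]; exact Finset.card_le_card Finset.inter_subset_left
      · exact Finset.card_le_card Finset.inter_subset_right
    have : ((T ∩ E).card : ℝ) ≤ ((min h E.card : ℕ) : ℝ) := by exact_mod_cast hle
    rw [hT]
    apply mul_le_mul_of_nonneg_left _ h2m.le
    linarith
  · -- construct witness T with card h and (T ∩ E).card = min h E.card
    obtain ⟨T, hTcard, hTE⟩ : ∃ T : Finset (Fin m), T.card = h ∧
        (T ∩ E).card = min h E.card := by
      rcases le_or_gt h E.card with hc | hc
      · obtain ⟨T, hTsub, hTc⟩ := Finset.exists_subset_card_eq hc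
        refine ⟨T, hTc, ?_⟩
        rw [Finset.inter_eq_left.2 hTsub, hTc, min_eq_left hc]
      · obtain ⟨T, hsub, _, hTc⟩ := Finset.exists_subsuperset_card_eq
          (Finset.subset_univ E) hc.le (by rw [Finset.card_univ, Fintype.card_fin]; exact hhm)
        refine ⟨T, hTc, ?_⟩
        rw [Finset.inter_eq_right.2 hsub, min_eq_right hc.le]
    have hmem : (fun i => if i ∈ T then (1 : ℝ) else 0) ∈ Fdd m := mem_Fdd.2 ⟨T, hTcard, rfl⟩
    refine le_trans ?_ (Finset.le_sup' _ hmem)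
    rw [sum_bsgn, hTE, hTcard]

/-- Telescoping identity. -/
lemma key_sum (h : ℕ) : ∀ j, j < h →
    ∑ k ∈ Finset.range (j + 1), (2 * h - 2 * k) * (2 * h).choose k
      = 2 * h * (2 * h - 1).choose j := by
  intro j
  induction j with
  | zero => simp
  | succ j ih =>
    intro hj
    rw [Finset.sum_range_succ, ih (by omega)]
    -- goal: 2h * C(2h-1, j) + (2h - 2(j+1)) * C(2h, j+1) = 2h * C(2h-1, j+1)
    have hpascal : (2 * h).choose (j + 1)
        = (2 * h - 1).choose j + (2 * h - 1).choose (j + 1) := by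
      have h1 : 2 * h = (2 * h - 1) + 1 := by omega
      nth_rewrite 1 [h1]
      rw [Nat.choose_succ_succ]
    have habs : 2 * h * (2 * h - 1).choose j = (2 * h).choose (j + 1) * (j + 1) := by
      have := Nat.add_one_mul_choose_eq (2 * h - 1) j
      have h1 : 2 * h - 1 + 1 = 2 * h := by omega
      rw [h1] at this
      simpa using this
    have hmono : (2 * h - 1).choose j ≤ (2 * h - 1).choose (j + 1) := by
      apply Nat.choose_le_succ_of_lt_half_left
      omega
    have hsub : 2 * (j + 1) ≤ 2 * h := by omega
    zify [hsub]
    have hpascalZ : (((2 * h).choose (j + 1) : ℕ) : ℤ)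
        = ((2 * h - 1).choose j : ℤ) + ((2 * h - 1).choose (j + 1) : ℤ) := by
      exact_mod_cast hpascal
    have habsZ : ((2 * h : ℕ) : ℤ) * ((2 * h - 1).choose j : ℤ)
        = ((2 * h).choose (j + 1) : ℤ) * ((j + 1 : ℕ) : ℤ) := by
      exact_mod_cast habs
    push_cast at hpascalZ habsZ ⊢
    linear_combination (2 * (h : ℤ)) * hpascalZ + 2 * habsZ

lemma key2 (h : ℕ) (hh : 0 < h) :
    ∑ k ∈ Finset.range h, (2 * h - 2 * k) * (2 * h).choose k
      = h * (2 * h).choose h := by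
  have := key_sum h (h - 1) (by omega)
  have h1 : h - 1 + 1 = h := by omega
  rw [h1] at this
  rw [this]
  have := Nat.add_one_mul_choose_eq (2 * h - 1) (h - 1)
  have h2 : 2 * h - 1 + 1 = 2 * h := by omega
  have h3 : h - 1 + 1 = h := by omega
  rw [h2, h3] at this
  rw [this]
  exact Nat.mul_comm _ _

lemma real_sum (h : ℕ) (hh : 0 < h) :
    ∑ k ∈ Finset.range (2 * h + 1), ((2 * h).choose k : ℝ) *
        ((2 / ((2 * h : ℕ) : ℝ)) * (2 * ((min h k : ℕ) : ℝ) - (h : ℝ)))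
      = 2 ^ (2 * h) - ((2 * h).choose h : ℝ) := by
  have hR : (0 : ℝ) < (h : ℝ) := by exact_mod_cast hh
  have hm : ((2 * h : ℕ) : ℝ) = 2 * (h : ℝ) := by push_cast; ring
  -- split the sum as ∑ C(m,k) - ∑ C(m,k) * (1 - v k)
  have hsplit : ∀ k, ((2 * h).choose k : ℝ) *
        ((2 / ((2 * h : ℕ) : ℝ)) * (2 * ((min h k : ℕ) : ℝ) - (h : ℝ)))
      = ((2 * h).choose k : ℝ)
        - ((2 * h).choose k : ℝ) *
            (1 - (2 / ((2 * h : ℕ) : ℝ)) * (2 * ((min h k : ℕ) : ℝ) - (h : ℝ))) := by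
    intro k; ring
  rw [Finset.sum_congr rfl (fun k _ => hsplit k), Finset.sum_sub_distrib]
  have hch : ∑ k ∈ Finset.range (2 * h + 1), ((2 * h).choose k : ℝ) = 2 ^ (2 * h) := by
    exact_mod_cast congrArg (Nat.cast : ℕ → ℝ) (Nat.sum_range_choose (2 * h))
  rw [hch]
  have hzero : ∀ k ∈ Finset.Ico h (2 * h + 1), ((2 * h).choose k : ℝ) *
      (1 - (2 / ((2 * h : ℕ) : ℝ)) * (2 * ((min h k : ℕ) : ℝ) - (h : ℝ))) = 0 := by
    intro k hk
    rw [Finset.mem_Ico] at hk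
    have : min h k = h := min_eq_left hk.1
    rw [this, hm]
    have : 1 - 2 / (2 * (h:ℝ)) * (2 * (h:ℝ) - (h:ℝ)) = 0 := by
      field_simp
      ring
    rw [this, mul_zero]
  have hsum2 : ∑ k ∈ Finset.range (2 * h + 1), ((2 * h).choose k : ℝ) *
      (1 - (2 / ((2 * h : ℕ) : ℝ)) * (2 * ((min h k : ℕ) : ℝ) - (h : ℝ)))
      = ∑ k ∈ Finset.range h, ((2 * h).choose k : ℝ) *
        (1 - (2 / ((2 * h : ℕ) : ℝ)) * (2 * ((min h k : ℕ) : ℝ) - (h : ℝ))) := by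
    rw [Finset.range_eq_Ico, ← Finset.sum_Ico_consecutive _ (Nat.zero_le h) (by omega)]
    rw [Finset.sum_congr rfl hzero]
    rw [Finset.sum_const_zero, add_zero, ← Finset.range_eq_Ico]
  rw [hsum2]
  -- now compute the remaining sum: equals C(2h, h)
  have hterm : ∀ k ∈ Finset.range h, ((2 * h).choose k : ℝ) *
      (1 - (2 / ((2 * h : ℕ) : ℝ)) * (2 * ((min h k : ℕ) : ℝ) - (h : ℝ)))
      = (((2 * h - 2 * k) * (2 * h).choose k : ℕ) : ℝ) / (h : ℝ) := by
    intro k hk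
    rw [Finset.mem_range] at hk
    have hmin : min h k = k := min_eq_right hk.le
    have hc : ((2 * h - 2 * k : ℕ) : ℝ) = 2 * (h : ℝ) - 2 * (k : ℝ) := by
      have : 2 * k ≤ 2 * h := by omega
      push_cast [Nat.cast_sub this]
      ring
    rw [hmin, hm]
    push_cast [hc]
    field_simp
    ring
  rw [Finset.sum_congr rfl hterm, ← Finset.sum_div, ← Nat.cast_sum]
  rw [key2 h hh]
  push_cast
  field_simp

/-- For the class `Fdd m` of all balanced `{0,1}`-valued vectors,
the PRC equals `1` while the Rademacher complexity equals
`1 − 2^{−m}·C(m, m/2)`. -/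
theorem PRC_one_Rad_eq {m : ℕ} (hm : 0 < m) (hme : Even m) :
    PRCu (Fdd m) (Fdd_nonempty m) (m / 2) = 1 ∧
    Rad (Fdd m) (Fdd_nonempty m)
      = 1 - (m.choose (m / 2) : ℝ) / 2 ^ m := by
  have hhm : m / 2 ≤ m := Nat.div_le_self m 2
  have hchoose : (0 : ℝ) < (m.choose (m / 2) : ℝ) := by
    exact_mod_cast Nat.choose_pos hhm
  constructor
  · -- PRC part
    rw [PRCu]
    have hsum : ∑ S ∈ (Finset.univ : Finset (Fin m)).powersetCard (m / 2),
        (Fdd m).sup' (Fdd_nonempty m)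
          (fun f => favg f (Finset.univ \ S) - favg f S)
        = (m.choose (m / 2) : ℝ) := by
      rw [Finset.sum_congr rfl (fun S hS => sup'_prc hm hme S
        (Finset.mem_powersetCard_univ.1 hS))]
      rw [Finset.sum_const, Finset.card_powersetCard, Finset.card_univ, Fintype.card_fin]
      simp
    rw [hsum]
    field_simp
  · -- Rad part
    rw [Rad]
    have hstep1 : ∑ ε : Fin m → Bool,
        (Fdd m).sup' (Fdd_nonempty m)
          (fun f => (2 / (m : ℝ)) * ∑ i, bsgn (ε i) * f i)
        = ∑ ε : Fin m → Bool, (2 / (m : ℝ)) *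
            (2 * ((min (m / 2) (Finset.univ.filter (fun i => ε i)).card : ℕ) : ℝ)
              - ((m / 2 : ℕ) : ℝ)) :=
      Finset.sum_congr rfl (fun ε _ => sup'_rad hm hme ε)
    rw [hstep1]
    -- reindex over subsets
    have hstep2 : ∑ ε : Fin m → Bool, (2 / (m : ℝ)) *
            (2 * ((min (m / 2) (Finset.univ.filter (fun i => ε i)).card : ℕ) : ℝ)
              - ((m / 2 : ℕ) : ℝ))
        = ∑ T ∈ (Finset.univ : Finset (Fin m)).powerset, (2 / (m : ℝ)) *
            (2 * ((min (m / 2) T.card : ℕ) : ℝ) - ((m / 2 : ℕ) : ℝ)) := by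
      apply Finset.sum_nbij' (i := fun ε => Finset.univ.filter (fun i => ε i))
        (j := fun T i => decide (i ∈ T))
      · intro ε _; exact Finset.mem_powerset.2 (Finset.filter_subset _ _)
      · intro T _; exact Finset.mem_univ _
      · intro ε _; funext i; simp
      · intro T _; ext i; simp
      · intro ε _
        rfl
    rw [hstep2, Finset.sum_powerset_apply_card
      (f := fun c => (2 / (m : ℝ)) *
        (2 * ((min (m / 2) c : ℕ) : ℝ) - ((m / 2 : ℕ) : ℝ)))]
    obtain ⟨h, hmh⟩ := hme
    have hmh' : m = 2 * h := by omega
    have hh : 0 < h := by omega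
    have hdiv : m / 2 = h := by omega
    subst hmh'
    rw [hdiv, Finset.card_univ, Fintype.card_fin]
    have := real_sum h hh
    have hsmul : ∀ k ∈ Finset.range (2 * h + 1),
        ((2 * h).choose k) • ((2 / ((2 * h : ℕ) : ℝ)) *
            (2 * ((min h k : ℕ) : ℝ) - ((h : ℕ) : ℝ)))
        = ((2 * h).choose k : ℝ) * ((2 / ((2 * h : ℕ) : ℝ)) *
            (2 * ((min h k : ℕ) : ℝ) - (h : ℝ))) := by
      intro k _; rw [nsmul_eq_mul]
    rw [Finset.sum_congr rfl hsmul, this]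
    have h2 : (0 : ℝ) < 2 ^ (2 * h) := by positivity
    field_simp
end

section
/- Let Z_N = {z_1,...,z_N} and F a finite set of functions Z_N → ℝ, with N = m + u and m = u. Then the conditional Rademacher complexity is at most the transductive Rademacher complexity with parameter p = 1/4: R_N(F, Z_N) ≤ R^td_{m+u}(F, Z_N, 1/4), where R^td_{m+u}(F, Z_N, p) = (1/m + 1/u) · E_σ[sup_{f∈F} Σ_{i=1}^N σ_i f(z_i)] with σ_i i.i.d. taking values ±1 with probability p each and 0 with probability 1 − 2p. -/
open Finset
open scoped Classical

/-- Transductive Rademacher complexity with parameter `p`: the signs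
`σ_i ∈ {−1,0,+1}` are encoded by `s i : Fin 3` via `σ_i = (s i : ℕ) − 1`,
with independent weights `p` for `±1` and `1 − 2p` for `0`. -/
noncomputable def TRC {N : ℕ} (F : Finset (Fin N → ℝ)) (hF : F.Nonempty)
    (m u : ℕ) (p : ℝ) : ℝ :=
  (1 / (m : ℝ) + 1 / (u : ℝ)) *
    ∑ s : Fin N → Fin 3,
      (∏ i, if s i = 1 then 1 - 2 * p else p) *
        F.sup' hF fun f => ∑ i, (((s i : ℕ) : ℝ) - 1) * f i

def enc : Bool × Bool → Fin 3 := fun p => if p.2 then (if p.1 then 2 else 0) else 1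

lemma enc_val (p : Bool × Bool) : (((enc p : ℕ) : ℝ) - 1) = if p.2 then bsgn p.1 else 0 := by
  rcases p with ⟨a, b⟩; cases a <;> cases b <;> simp [enc, bsgn] <;> norm_num

lemma enc_fiber (v : Fin 3) :
    (Finset.univ.filter fun p : Bool × Bool => enc p = v).card = if v = 1 then 2 else 1 := by
  revert v; decide

lemma sup'_const_mul {α : Type*} (F : Finset α) (hF : F.Nonempty) (g : α → ℝ) {c : ℝ}
    (hc : 0 ≤ c) : F.sup' hF (fun f => c * g f) = c * F.sup' hF g := by
  obtain ⟨f0, hf0, h0⟩ := F.exists_mem_eq_sup' hF g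
  apply le_antisymm
  · apply Finset.sup'_le
    intro f hf
    exact mul_le_mul_of_nonneg_left (Finset.le_sup' g hf) hc
  · rw [h0]; exact Finset.le_sup' (fun f => c * g f) hf0

lemma reindex (N : ℕ) (H : (Fin N → Fin 3) → ℝ) :
    ∑ s : Fin N → Fin 3, (∏ i, if s i = 1 then (1/2 : ℝ) else 1/4) * H s
      = (1/4 : ℝ)^N * ∑ t : Fin N → Bool × Bool, H (fun i => enc (t i)) := by
  have hsurj : Function.Surjective (fun (t : Fin N → Bool × Bool) (i : Fin N) => enc (t i)) := by
    intro s
    refine ⟨fun i => if s i = 0 then (false, true) else if s i = 1 then (true, false)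
      else (true, true), ?_⟩
    funext i
    have : ∀ v : Fin 3, enc (if v = 0 then ((false, true) : Bool × Bool)
        else if v = 1 then (true, false) else (true, true)) = v := by decide
    exact this (s i)
  rw [Finset.sum_comp H (fun (t : Fin N → Bool × Bool) (i : Fin N) => enc (t i)),
    Finset.image_univ_of_surjective hsurj, Finset.mul_sum]
  refine Finset.sum_congr rfl fun s _ => ?_
  have hcard : (Finset.univ.filter
      fun t : Fin N → Bool × Bool => (fun i => enc (t i)) = s).card
      = ∏ i, (if s i = 1 then 2 else 1 : ℕ) := by
    have : (Finset.univ.filter fun t : Fin N → Bool × Bool => (fun i => enc (t i)) = s)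
        = Fintype.piFinset (fun i => Finset.univ.filter fun p => enc p = s i) := by
      ext t
      simp [Fintype.mem_piFinset, funext_iff]
    rw [this, Fintype.card_piFinset]
    exact Finset.prod_congr rfl fun i _ => enc_fiber (s i)
  rw [hcard, nsmul_eq_mul]
  push_cast
  rw [← mul_assoc]
  congr 1
  have h4 : ((1:ℝ)/4)^N = ∏ _i : Fin N, (1/4:ℝ) := by simp
  rw [h4, ← Finset.prod_mul_distrib]
  refine Finset.prod_congr rfl fun i _ => ?_
  split_ifs <;> norm_num

lemma count_eta (N : ℕ) (i : Fin N) :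
    ∑ η : Fin N → Bool, (if η i then (1:ℝ) else 0) = 2^N / 2 := by
  have hinv : Function.Involutive (fun η : Fin N → Bool => Function.update η i (!η i)) := by
    intro η
    funext j
    by_cases h : j = i
    · subst h; simp
    · simp [Function.update_of_ne h]
  have hflip : ∑ η : Fin N → Bool, (if η i then (1:ℝ) else 0)
      = ∑ η : Fin N → Bool, (if η i then (0:ℝ) else 1) := by
    rw [← hinv.bijective.sum_comp (fun η => if η i then (1:ℝ) else 0)]
    refine Finset.sum_congr rfl fun η _ => ?_
    simp only [Function.update_self]
    cases h : η i <;> simp [h]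
  have htot : ∑ η : Fin N → Bool, ((if η i then (1:ℝ) else 0) + (if η i then (0:ℝ) else 1))
      = 2^N := by
    have h1 : ∀ η : Fin N → Bool,
        ((if η i then (1:ℝ) else 0) + (if η i then (0:ℝ) else 1)) = 1 := by
      intro η; cases h : η i <;> simp [h]
    simp only [h1, Finset.sum_const, Finset.card_univ, nsmul_eq_mul, mul_one]
    simp [Fintype.card_fun]
  rw [Finset.sum_add_distrib, ← hflip] at htot
  linarith

/-- When `m = u` and `N = m + u`, the conditional Rademacher complexity is
bounded by the transductive Rademacher complexity with `p = 1/4`. -/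
theorem Rad_le_TRC {N m u : ℕ} (hm : 0 < m) (hmu : m = u) (hN : N = m + u)
    (F : Finset (Fin N → ℝ)) (hF : F.Nonempty) :
    Rad F hF ≤ TRC F hF m u (1 / 4) := by
  subst hmu
  have hNm : (N : ℝ) = 2 * m := by rw [hN]; push_cast; ring
  have hm' : (0:ℝ) < m := by exact_mod_cast hm
  set Sε := ∑ ε : Fin N → Bool, F.sup' hF fun f => ∑ i, bsgn (ε i) * f i with hS
  -- Rad rewritten
  have hRad : Rad F hF = ((1:ℝ)/m) / 2^N * Sε := by
    rw [Rad]
    have hc : (0:ℝ) ≤ 2 / (N:ℝ) := by positivity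
    have : ∀ ε : Fin N → Bool,
        (F.sup' hF fun f => (2 / (N : ℝ)) * ∑ i, bsgn (ε i) * f i)
        = (2 / (N:ℝ)) * F.sup' hF fun f => ∑ i, bsgn (ε i) * f i :=
      fun ε => sup'_const_mul F hF _ hc
    simp only [this]
    rw [← Finset.mul_sum, ← hS, hNm]
    field_simp
  -- TRC rewritten via reindexing
  set G : (Fin N → Bool × Bool) → ℝ :=
    fun t => F.sup' hF fun f => ∑ i, (((enc (t i) : ℕ) : ℝ) - 1) * f i with hG
  have hTRC : TRC F hF m m (1/4)
      = (2/(m:ℝ)) * ((1/4:ℝ)^N * ∑ t : Fin N → Bool × Bool, G t) := by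
    rw [TRC]
    have hw : ∀ s : Fin N → Fin 3,
        (∏ i, if s i = 1 then (1:ℝ) - 2 * (1/4) else (1/4))
        = ∏ i, if s i = 1 then (1/2:ℝ) else 1/4 := by
      intro s; refine Finset.prod_congr rfl fun i _ => ?_; norm_num
    simp only [hw]
    rw [reindex N (fun s => F.sup' hF fun f => ∑ i, (((s i : ℕ) : ℝ) - 1) * f i)]
    have h2 : (1:ℝ)/m + 1/m = 2/m := by ring
    rw [h2]
  -- sum over pairs splits
  have hsplit : ∑ t : Fin N → Bool × Bool, G t
      = ∑ ε : Fin N → Bool, ∑ η : Fin N → Bool, G (fun i => (ε i, η i)) := by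
    rw [← Equiv.sum_comp (Equiv.arrowProdEquivProdArrow (Fin N) (fun _ => Bool) (fun _ => Bool)).symm G,
      Fintype.sum_prod_type]
    rfl
  -- key Jensen step
  have key : ∀ ε : Fin N → Bool,
      (2^N/2 : ℝ) * (F.sup' hF fun f => ∑ i, bsgn (ε i) * f i)
        ≤ ∑ η : Fin N → Bool, G (fun i => (ε i, η i)) := by
    intro ε
    rw [← sup'_const_mul F hF _ (by positivity : (0:ℝ) ≤ 2^N/2)]
    apply Finset.sup'_le
    intro f hf
    have E : ∀ η : Fin N → Bool, ∑ i, (((enc (ε i, η i) : ℕ) : ℝ) - 1) * f i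
        = ∑ i, (if η i then (1:ℝ) else 0) * (bsgn (ε i) * f i) := by
      intro η; refine Finset.sum_congr rfl fun i _ => ?_
      rw [enc_val]; cases h : η i <;> simp [h]
    have E2 : ∑ η : Fin N → Bool, ∑ i, (((enc (ε i, η i) : ℕ) : ℝ) - 1) * f i
        = (2^N/2 : ℝ) * ∑ i, bsgn (ε i) * f i := by
      simp only [E]
      rw [Finset.sum_comm]
      have : ∀ i : Fin N, ∑ η : Fin N → Bool, (if η i then (1:ℝ) else 0) * (bsgn (ε i) * f i)
          = (2^N/2 : ℝ) * (bsgn (ε i) * f i) := by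
        intro i; rw [← Finset.sum_mul, count_eta]
      simp only [this]
      rw [← Finset.mul_sum]
    calc (2^N/2 : ℝ) * ∑ i, bsgn (ε i) * f i
        = ∑ η : Fin N → Bool, ∑ i, (((enc (ε i, η i) : ℕ) : ℝ) - 1) * f i := E2.symm
      _ ≤ ∑ η : Fin N → Bool, G (fun i => (ε i, η i)) :=
          Finset.sum_le_sum fun η _ => by
            exact Finset.le_sup' (fun f => ∑ i, (((enc (ε i, η i) : ℕ) : ℝ) - 1) * f i) hf
  -- combine
  have step : (2^N/2 : ℝ) * Sε ≤ ∑ t : Fin N → Bool × Bool, G t := by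
    rw [hsplit, hS, Finset.mul_sum]
    exact Finset.sum_le_sum fun ε _ => key ε
  have hcoef : ((1:ℝ)/m) / 2^N = (2/(m:ℝ)) * ((1/4:ℝ)^N * (2^N/2)) := by
    have h4 : (4:ℝ)^N = 2^N * 2^N := by rw [← mul_pow]; norm_num
    rw [div_pow, one_pow, h4]
    field_simp
  rw [hRad, hTRC, hcoef]
  have h2 : (0:ℝ) ≤ 2/(m:ℝ) * (1/4)^N := by positivity
  calc (2/(m:ℝ) * ((1/4)^N * (2^N/2))) * Sε
      = (2/(m:ℝ) * (1/4)^N) * ((2^N/2) * Sε) := by ring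
    _ ≤ (2/(m:ℝ) * (1/4)^N) * ∑ t : Fin N → Bool × Bool, G t :=
        mul_le_mul_of_nonneg_left step h2
    _ = 2/(m:ℝ) * ((1/4)^N * ∑ t : Fin N → Bool × Bool, G t) := by ring
end

section
/- Let Z_N be a finite set of N = m + u labeled points with m = u, H a finite hypothesis class, and ℓ a loss bounded in [0,1]; write err_u(h) and err_m(h) for the average loss of h on the test set Z_u = Z_N \ Z_m and training set Z_m respectively, where Z_m is a uniformly random m-subset of Z_N. Suppose the function g(Z_m) = sup_{h∈H} (err_u(h) − err_m(h)) satisfies, with probability at least 1 − δ, g ≤ E[g] + √(2N log(1/δ)/(N − 1/2)²) (bounded-difference concentration). Then with probability at least 1 − δ, for all h ∈ H: err_u(h) ≤ err_m(h) + E[Q_{m,n}(L_H, Z_m)] + √(2N log(1/δ)/(N − 1/2)²), for any n ∈ {1,...,m−1}, where L_H = {ℓ_h : h ∈ H} and Q is the permutational Rademacher complexity. -/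
open Finset
open scoped Classical

/-- Permutational Rademacher complexity of the loss class
`L_H = {ℓ_h : h ∈ H}` on the set `Zm`, with split parameter `n`. -/
noncomputable def PRCL {ι : Type*} {N : ℕ} (H : Finset ι) (hH : H.Nonempty)
    (ℓ : ι → Fin N → ℝ) (Zm : Finset (Fin N)) (n : ℕ) : ℝ :=
  (1 / (Zm.card.choose n : ℝ)) *
    ∑ S ∈ Zm.powersetCard n,
      H.sup' hH fun h => favg (ℓ h) (Zm \ S) - favg (ℓ h) S

lemma card_filter_mem {α : Type*} [DecidableEq α] (Z : Finset α) (n : ℕ) (hn : 1 ≤ n) (x : α) (hx : x ∈ Z) :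
    ((Z.powersetCard n).filter fun S => x ∈ S).card = (Z.card - 1).choose (n - 1) := by
  rw [← Finset.card_erase_of_mem hx, ← Finset.card_powersetCard]
  refine Finset.card_bij' (fun S _ => S.erase x) (fun W _ => insert x W) ?_ ?_ ?_ ?_
  · intro S hS
    simp only [mem_filter, mem_powersetCard] at hS
    rw [mem_powersetCard]
    refine ⟨fun y hy => ?_, by rw [card_erase_of_mem hS.2, hS.1.2]⟩
    rw [mem_erase] at hy ⊢
    exact ⟨hy.1, hS.1.1 hy.2⟩
  · intro W hW
    rw [mem_powersetCard] at hW
    have hxW : x ∉ W := fun h => (mem_erase.1 (hW.1 h)).1 rfl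
    simp only [mem_filter, mem_powersetCard]
    refine ⟨⟨?_, ?_⟩, mem_insert_self _ _⟩
    · intro y hy
      rcases mem_insert.1 hy with rfl | hy
      · exact hx
      · exact (erase_subset _ _) (hW.1 hy)
    · rw [card_insert_of_notMem hxW, hW.2]
      omega
  · intro S hS
    simp only [mem_filter] at hS
    exact insert_erase hS.2
  · intro W hW
    rw [mem_powersetCard] at hW
    have hxW : x ∉ W := fun h => (mem_erase.1 (hW.1 h)).1 rfl
    exact erase_insert hxW

lemma sum_favg {α : Type*} [DecidableEq α] (Z : Finset α) (f : α → ℝ) {n : ℕ}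
    (hn : 1 ≤ n) (hnZ : n ≤ Z.card) :
    ∑ S ∈ Z.powersetCard n, favg f S = (Z.card.choose n : ℝ) * favg f Z := by
  have hcard : ∀ S ∈ Z.powersetCard n, favg f S = (∑ x ∈ S, f x) / n := by
    intro S hS
    rw [favg, (mem_powersetCard.1 hS).2]
  rw [Finset.sum_congr rfl hcard, ← Finset.sum_div]
  have key : ∑ S ∈ Z.powersetCard n, ∑ x ∈ S, f x
      = ((Z.card - 1).choose (n - 1) : ℝ) * ∑ x ∈ Z, f x := by
    have : ∀ S ∈ Z.powersetCard n, ∑ x ∈ S, f x = ∑ x ∈ Z, if x ∈ S then f x else 0 := by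
      intro S hS
      rw [← Finset.sum_filter, Finset.filter_mem_eq_inter,
        Finset.inter_eq_right.2 (mem_powersetCard.1 hS).1]
    rw [Finset.sum_congr rfl this, Finset.sum_comm]
    rw [Finset.mul_sum]
    refine Finset.sum_congr rfl fun x hx => ?_
    rw [← Finset.sum_filter, Finset.sum_const, ← card_filter_mem Z n hn x hx]
    simp [mul_comm]
  rw [key, favg]
  have hZ1 : 1 ≤ Z.card := le_trans hn hnZ
  have hnat : Z.card * (Z.card - 1).choose (n - 1) = Z.card.choose n * n := by
    have := Nat.add_one_mul_choose_eq (Z.card - 1) (n - 1)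
    have h1 : Z.card - 1 + 1 = Z.card := Nat.succ_pred_eq_of_pos hZ1
    have h2 : n - 1 + 1 = n := Nat.succ_pred_eq_of_pos hn
    rw [h1, h2] at this
    exact this
  have hn0 : (n : ℝ) ≠ 0 := by positivity
  have hm0 : (Z.card : ℝ) ≠ 0 := by positivity
  have hreal : ((Z.card : ℝ)) * ((Z.card - 1).choose (n - 1) : ℝ)
      = ((Z.card.choose n : ℝ)) * n := by exact_mod_cast hnat
  field_simp
  linear_combination (∑ x ∈ Z, f x) * hreal

section
variable {ι α : Type*} [Fintype α] [DecidableEq α]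

-- number of m-subsets containing S and disjoint from T
lemma card_Z_count {m n : ℕ} (hnm : n ≤ m) (S T : Finset α) (hS : S.card = n)
    (hT : T.card = m - n) (hST : Disjoint S T) :
    (((univ : Finset α).powersetCard m).filter fun Z => S ⊆ Z ∧ Disjoint T Z).card
      = (Fintype.card α - m).choose (m - n) := by
  have hcardc : ((univ : Finset α) \ (S ∪ T)).card = Fintype.card α - m := by
    rw [card_sdiff_of_subset (subset_univ _), card_union_of_disjoint hST, hS, hT, card_univ]
    omega
  rw [← hcardc, ← Finset.card_powersetCard]
  refine Finset.card_bij' (fun Z _ => Z \ S) (fun W _ => S ∪ W) ?_ ?_ ?_ ?_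
  · intro Z hZ
    simp only [mem_filter, mem_powersetCard] at hZ
    obtain ⟨⟨-, hZm⟩, hSZ, hTZ⟩ := hZ
    rw [mem_powersetCard]
    constructor
    · intro y hy
      rw [mem_sdiff] at hy
      rw [mem_sdiff, mem_union]
      exact ⟨mem_univ _, fun h => h.elim hy.2 (fun hyT => (disjoint_left.1 hTZ) hyT hy.1)⟩
    · rw [card_sdiff_of_subset hSZ, hZm, hS]
  · intro W hW
    rw [mem_powersetCard] at hW
    obtain ⟨hWsub, hWcard⟩ := hW
    have hSW : Disjoint S W := by
      rw [disjoint_right]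
      intro a haW haS
      have := hWsub haW
      rw [mem_sdiff, mem_union] at this
      exact this.2 (Or.inl haS)
    have hTW : Disjoint T W := by
      rw [disjoint_right]
      intro a haW haT
      have := hWsub haW
      rw [mem_sdiff, mem_union] at this
      exact this.2 (Or.inr haT)
    simp only [mem_filter, mem_powersetCard]
    refine ⟨⟨subset_univ _, ?_⟩, subset_union_left, ?_⟩
    · rw [card_union_of_disjoint hSW, hS, hWcard]
      omega
    · rw [disjoint_union_right]
      exact ⟨hST.symm, hTW⟩
  · intro Z hZ
    simp only [mem_filter, mem_powersetCard] at hZ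
    exact union_sdiff_of_subset hZ.2.1
  · intro W hW
    rw [mem_powersetCard] at hW
    have hSW : Disjoint S W := by
      rw [disjoint_right]
      intro a haW haS
      have := hW.1 haW
      rw [mem_sdiff, mem_union] at this
      exact this.2 (Or.inl haS)
    show (S ∪ W) \ S = W
    rw [union_sdiff_cancel_left hSW]

-- pair reindexing: sum over (Z, S ⊆ Z) of F S (Z\S) = sum over disjoint pairs
lemma sum_pairs {m n : ℕ} (hnm : n ≤ m) (F : Finset α → Finset α → ℝ) :
    ∑ Z ∈ (univ : Finset α).powersetCard m, ∑ S ∈ Z.powersetCard n, F S (Z \ S)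
      = ∑ p ∈ (((univ : Finset α).powersetCard n) ×ˢ
          ((univ : Finset α).powersetCard (m - n))).filter fun p => Disjoint p.1 p.2,
          F p.1 p.2 := by
  rw [Finset.sum_sigma']
  refine Finset.sum_bij' (fun x _ => (x.2, x.1 \ x.2)) (fun p _ => ⟨p.1 ∪ p.2, p.1⟩)
    ?_ ?_ ?_ ?_ ?_
  · rintro ⟨Z, S⟩ hx
    simp only [mem_sigma, mem_powersetCard] at hx
    obtain ⟨⟨-, hZm⟩, hSZ, hSn⟩ := hx
    simp only [mem_filter, mem_product, mem_powersetCard]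
    exact ⟨⟨⟨subset_univ _, hSn⟩, ⟨subset_univ _, by rw [card_sdiff_of_subset hSZ, hZm, hSn]⟩⟩,
      disjoint_sdiff⟩
  · rintro ⟨S, T⟩ hp
    simp only [mem_filter, mem_product, mem_powersetCard] at hp
    obtain ⟨⟨⟨-, hSn⟩, -, hTc⟩, hd⟩ := hp
    simp only [mem_sigma, mem_powersetCard]
    exact ⟨⟨subset_univ _, by rw [card_union_of_disjoint hd, hSn, hTc]; omega⟩,
      subset_union_left, hSn⟩
  · rintro ⟨Z, S⟩ hx
    simp only [mem_sigma, mem_powersetCard] at hx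
    have : S ∪ Z \ S = Z := union_sdiff_of_subset hx.2.1
    simp [this]
  · rintro ⟨S, T⟩ hp
    simp only [mem_filter, mem_product, mem_powersetCard] at hp
    simp [union_sdiff_cancel_left hp.2]
  · rintro ⟨Z, S⟩ hx
    rfl

lemma sum_triple {m n : ℕ} (hnm : n ≤ m) (F : Finset α → Finset α → ℝ) :
    ∑ Z ∈ (univ : Finset α).powersetCard m, ∑ S ∈ Z.powersetCard n,
        ∑ T ∈ ((univ : Finset α) \ Z).powersetCard (m - n), F S T
      = ((Fintype.card α - m).choose (m - n) : ℝ) *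
          ∑ p ∈ (((univ : Finset α).powersetCard n) ×ˢ
            ((univ : Finset α).powersetCard (m - n))).filter fun p => Disjoint p.1 p.2,
            F p.1 p.2 := by
  have h1 : ∀ Z : Finset α, Z.powersetCard n
      = ((univ : Finset α).powersetCard n).filter fun S => S ⊆ Z := by
    intro Z; ext S
    simp only [mem_powersetCard, mem_filter, subset_univ, true_and, and_comm]
  have h2 : ∀ Z : Finset α, (((univ : Finset α)) \ Z).powersetCard (m - n)
      = ((univ : Finset α).powersetCard (m - n)).filter fun T => Disjoint T Z := by
    intro Z; ext T
    simp only [mem_powersetCard, mem_filter, subset_sdiff, subset_univ, true_and, and_comm]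
  have step1 : ∑ Z ∈ (univ : Finset α).powersetCard m, ∑ S ∈ Z.powersetCard n,
        ∑ T ∈ ((univ : Finset α) \ Z).powersetCard (m - n), F S T
      = ∑ Z ∈ (univ : Finset α).powersetCard m, ∑ S ∈ (univ : Finset α).powersetCard n,
        ∑ T ∈ (univ : Finset α).powersetCard (m - n),
          if S ⊆ Z ∧ Disjoint T Z then F S T else 0 := by
    refine Finset.sum_congr rfl fun Z _ => ?_
    rw [h1 Z, Finset.sum_filter]
    refine Finset.sum_congr rfl fun S _ => ?_
    rw [h2 Z, Finset.sum_filter]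
    split_ifs with h
    · exact Finset.sum_congr rfl fun T _ => by simp [h]
    · simp [h]
  rw [step1, Finset.sum_comm]
  have step2 : ∀ S : Finset α, ∑ Z ∈ (univ : Finset α).powersetCard m,
        ∑ T ∈ (univ : Finset α).powersetCard (m - n),
          (if S ⊆ Z ∧ Disjoint T Z then F S T else 0)
      = ∑ T ∈ (univ : Finset α).powersetCard (m - n),
          ∑ Z ∈ (univ : Finset α).powersetCard m,
          (if S ⊆ Z ∧ Disjoint T Z then F S T else 0) := fun S => Finset.sum_comm
  simp_rw [step2]
  have step3 : ∀ S ∈ (univ : Finset α).powersetCard n,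
      ∀ T ∈ (univ : Finset α).powersetCard (m - n),
      ∑ Z ∈ (univ : Finset α).powersetCard m,
          (if S ⊆ Z ∧ Disjoint T Z then F S T else 0)
        = if Disjoint S T then ((Fintype.card α - m).choose (m - n) : ℝ) * F S T else 0 := by
    intro S hS T hT
    rw [mem_powersetCard] at hS hT
    rw [← Finset.sum_filter, Finset.sum_const, nsmul_eq_mul]
    split_ifs with hd
    · rw [card_Z_count hnm S T hS.2 hT.2 hd]
    · have : (((univ : Finset α).powersetCard m).filter
          fun Z => S ⊆ Z ∧ Disjoint T Z) = ∅ := by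
        rw [Finset.filter_eq_empty_iff]
        rintro Z - ⟨hSZ, hTZ⟩
        exact hd (disjoint_of_subset_left hSZ hTZ.symm)
      rw [this]; simp
  rw [Finset.sum_congr rfl (fun S hS => Finset.sum_congr rfl (step3 S hS))]
  rw [← Finset.sum_product', Finset.mul_sum, ← Finset.sum_filter]


lemma perZ {m n : ℕ} (hn : 1 ≤ n) (hnm : n ≤ m - 1) (hm2 : 2 ≤ m)
    (H : Finset ι) (hH : H.Nonempty) (ℓ : ι → α → ℝ)
    (Z : Finset α) (hZ : Z.card = m) (hZc : ((univ : Finset α) \ Z).card = m) :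
    ((m.choose n : ℝ) * (m.choose (m - n) : ℝ)) *
        H.sup' hH (fun h => favg (ℓ h) ((univ : Finset α) \ Z) - favg (ℓ h) Z)
      ≤ ∑ S ∈ Z.powersetCard n, ∑ T ∈ ((univ : Finset α) \ Z).powersetCard (m - n),
          H.sup' hH fun h => favg (ℓ h) T - favg (ℓ h) S := by
  obtain ⟨h0, hh0, hsup⟩ := Finset.exists_mem_eq_sup' hH
    (fun h => favg (ℓ h) ((univ : Finset α) \ Z) - favg (ℓ h) Z)
  rw [hsup]
  have hmn1 : 1 ≤ m - n := by omega
  have hmnm : m - n ≤ m := by omega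
  have hEq : ∑ S ∈ Z.powersetCard n, ∑ T ∈ ((univ : Finset α) \ Z).powersetCard (m - n),
        (favg (ℓ h0) T - favg (ℓ h0) S)
      = ((m.choose n : ℝ) * (m.choose (m - n) : ℝ)) *
          (favg (ℓ h0) ((univ : Finset α) \ Z) - favg (ℓ h0) Z) := by
    have hT : ∑ T ∈ ((univ : Finset α) \ Z).powersetCard (m - n), favg (ℓ h0) T
        = (m.choose (m - n) : ℝ) * favg (ℓ h0) ((univ : Finset α) \ Z) := by
      rw [sum_favg _ _ hmn1 (hZc ▸ hmnm), hZc]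
    have hS : ∑ S ∈ Z.powersetCard n, favg (ℓ h0) S
        = (m.choose n : ℝ) * favg (ℓ h0) Z := by
      rw [sum_favg _ _ hn (hZ ▸ (by omega : n ≤ m)), hZ]
    have hcT : (((univ : Finset α) \ Z).powersetCard (m - n)).card = m.choose (m - n) := by
      rw [Finset.card_powersetCard, hZc]
    have hcS : (Z.powersetCard n).card = m.choose n := by
      rw [Finset.card_powersetCard, hZ]
    simp_rw [Finset.sum_sub_distrib, hT, Finset.sum_const, hcT, nsmul_eq_mul]
    rw [hcS, ← Finset.mul_sum, hS]
    ring
  calc ((m.choose n : ℝ) * (m.choose (m - n) : ℝ)) *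
        (favg (ℓ h0) ((univ : Finset α) \ Z) - favg (ℓ h0) Z)
      = ∑ S ∈ Z.powersetCard n, ∑ T ∈ ((univ : Finset α) \ Z).powersetCard (m - n),
          (favg (ℓ h0) T - favg (ℓ h0) S) := hEq.symm
    _ ≤ _ := by
        refine Finset.sum_le_sum fun S _ => Finset.sum_le_sum fun T _ => ?_
        exact Finset.le_sup' (fun h => favg (ℓ h) T - favg (ℓ h) S) hh0


end

/-- Transductive risk bound in expectation-of-PRC form.  The general
population is `Fin N` with `N = m + u`, `m = u`; `ℓ h i ∈ [0,1]` is the loss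
of hypothesis `h` at the labeled point `i`; the training set `Zm` is a
uniformly random `m`-subset.  Assuming the bounded-difference concentration
statement for `g(Zm) = sup_{h∈H}(err_u(h) − err_m(h))` (stated as: with
probability `≥ 1 − δ` over `Zm`, `g ≤ E[g] + slack`), with probability
`≥ 1 − δ` every `h ∈ H` satisfies
`err_u(h) ≤ err_m(h) + E[PRC(L_H, ·, n)] + slack`. -/
theorem transductive_risk_bound {ι : Type*} {N m u n : ℕ}
    (hN : N = m + u) (hmu : m = u) (hme : Even m) (hn : 1 ≤ n)
    (hnm : n ≤ m - 1) (H : Finset ι) (hH : H.Nonempty) (ℓ : ι → Fin N → ℝ)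
    (hℓ : ∀ h ∈ H, ∀ i, 0 ≤ ℓ h i ∧ ℓ h i ≤ 1) (δ : ℝ) (hδ0 : 0 < δ)
    (hδ1 : δ < 1)
    (hconc :
      ((1 - δ) * (N.choose m : ℝ)) ≤
        (((Finset.univ : Finset (Fin N)).powersetCard m).filter fun Zm =>
            H.sup' hH (fun h =>
                favg (ℓ h) (Finset.univ \ Zm) - favg (ℓ h) Zm)
              ≤ (1 / (N.choose m : ℝ)) *
                  ∑ Z ∈ (Finset.univ : Finset (Fin N)).powersetCard m,
                    H.sup' hH (fun h =>
                      favg (ℓ h) (Finset.univ \ Z) - favg (ℓ h) Z)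
                + Real.sqrt (2 * N * Real.log (1 / δ) / (N - 1 / 2) ^ 2)).card) :
    ((1 - δ) * (N.choose m : ℝ)) ≤
      (((Finset.univ : Finset (Fin N)).powersetCard m).filter fun Zm =>
          ∀ h ∈ H,
            favg (ℓ h) (Finset.univ \ Zm)
              ≤ favg (ℓ h) Zm
                + (1 / (N.choose m : ℝ)) *
                    ∑ Z ∈ (Finset.univ : Finset (Fin N)).powersetCard m,
                      PRCL H hH ℓ Z n
                + Real.sqrt (2 * N * Real.log (1 / δ) / (N - 1 / 2) ^ 2)).card := by
  classical
  have hm2 : 2 ≤ m := by omega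
  have hnm' : n ≤ m := by omega
  have hmn1 : 1 ≤ m - n := by omega
  set slack := Real.sqrt (2 * N * Real.log (1 / δ) / (N - 1 / 2) ^ 2) with hslack
  set pcm := ((Finset.univ : Finset (Fin N)).powersetCard m) with hpcm
  set F : Finset (Fin N) → Finset (Fin N) → ℝ :=
    fun S T => H.sup' hH fun h => favg (ℓ h) T - favg (ℓ h) S with hFdef
  have hC1 : (0 : ℝ) < (m.choose n : ℝ) := by
    exact_mod_cast Nat.choose_pos hnm'
  have hC2 : (0 : ℝ) < (m.choose (m - n) : ℝ) := by
    exact_mod_cast Nat.choose_pos (by omega : m - n ≤ m)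
  have hZfacts : ∀ Z ∈ pcm, Z.card = m ∧ ((Finset.univ : Finset (Fin N)) \ Z).card = m := by
    intro Z hZ
    rw [hpcm, mem_powersetCard] at hZ
    refine ⟨hZ.2, ?_⟩
    rw [card_sdiff_of_subset hZ.1, card_univ, Fintype.card_fin, hZ.2]
    omega
  -- symmetrization: sum of sups ≤ sum of PRCLs
  have key : ∑ Z ∈ pcm, H.sup' hH (fun h =>
        favg (ℓ h) (Finset.univ \ Z) - favg (ℓ h) Z)
      ≤ ∑ Z ∈ pcm, PRCL H hH ℓ Z n := by
    have hsum1 : ∑ Z ∈ pcm, ((m.choose n : ℝ) * (m.choose (m - n) : ℝ)) *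
          H.sup' hH (fun h => favg (ℓ h) (Finset.univ \ Z) - favg (ℓ h) Z)
        ≤ ∑ Z ∈ pcm, ∑ S ∈ Z.powersetCard n,
            ∑ T ∈ ((Finset.univ : Finset (Fin N)) \ Z).powersetCard (m - n), F S T := by
      refine Finset.sum_le_sum fun Z hZ => ?_
      exact perZ hn hnm hm2 H hH ℓ Z (hZfacts Z hZ).1 (hZfacts Z hZ).2
    have htr : ∑ Z ∈ pcm, ∑ S ∈ Z.powersetCard n,
          ∑ T ∈ ((Finset.univ : Finset (Fin N)) \ Z).powersetCard (m - n), F S T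
        = (m.choose (m - n) : ℝ) *
            ∑ p ∈ (((Finset.univ : Finset (Fin N)).powersetCard n) ×ˢ
              ((Finset.univ : Finset (Fin N)).powersetCard (m - n))).filter
                fun p => Disjoint p.1 p.2, F p.1 p.2 := by
      rw [hpcm, sum_triple hnm' F]
      congr 2
      rw [Fintype.card_fin]
      congr 1
      omega
    have hpairs : ∑ Z ∈ pcm, PRCL H hH ℓ Z n
        = (1 / (m.choose n : ℝ)) *
            ∑ p ∈ (((Finset.univ : Finset (Fin N)).powersetCard n) ×ˢ
              ((Finset.univ : Finset (Fin N)).powersetCard (m - n))).filter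
                fun p => Disjoint p.1 p.2, F p.1 p.2 := by
      have hc : ∀ Z ∈ pcm, PRCL H hH ℓ Z n
          = (1 / (m.choose n : ℝ)) * ∑ S ∈ Z.powersetCard n, F S (Z \ S) := by
        intro Z hZ
        rw [PRCL, (hZfacts Z hZ).1]
      rw [Finset.sum_congr rfl hc, ← Finset.mul_sum, hpcm, sum_pairs hnm' F]
    rw [hpairs]
    rw [← Finset.mul_sum, htr] at hsum1
    set X := ∑ p ∈ (((Finset.univ : Finset (Fin N)).powersetCard n) ×ˢ
        ((Finset.univ : Finset (Fin N)).powersetCard (m - n))).filter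
          fun p => Disjoint p.1 p.2, F p.1 p.2
    set Y := ∑ Z ∈ pcm, H.sup' hH (fun h =>
        favg (ℓ h) (Finset.univ \ Z) - favg (ℓ h) Z)
    rw [one_div_mul_eq_div, le_div_iff₀ hC1]
    have h2 : (m.choose (m - n) : ℝ) * ((m.choose n : ℝ) * Y)
        ≤ (m.choose (m - n) : ℝ) * X := by
      calc (m.choose (m - n) : ℝ) * ((m.choose n : ℝ) * Y)
          = (m.choose n : ℝ) * (m.choose (m - n) : ℝ) * Y := by ring
        _ ≤ (m.choose (m - n) : ℝ) * X := hsum1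
    have h3 := le_of_mul_le_mul_left h2 hC2
    linarith
  refine le_trans hconc (Nat.cast_le.2 (Finset.card_le_card ?_))
  refine Finset.monotone_filter_right _ ?_
  intro Zm _ h1 h hh
  have hle : favg (ℓ h) (Finset.univ \ Zm) - favg (ℓ h) Zm
      ≤ H.sup' hH (fun h => favg (ℓ h) (Finset.univ \ Zm) - favg (ℓ h) Zm) :=
    Finset.le_sup' (fun h' => favg (ℓ h') (Finset.univ \ Zm) - favg (ℓ h') Zm) hh
  have hEQ : (1 / (N.choose m : ℝ)) *
        ∑ Z ∈ (Finset.univ : Finset (Fin N)).powersetCard m,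
          H.sup' hH (fun h => favg (ℓ h) (Finset.univ \ Z) - favg (ℓ h) Z)
      ≤ (1 / (N.choose m : ℝ)) *
        ∑ Z ∈ (Finset.univ : Finset (Fin N)).powersetCard m, PRCL H hH ℓ Z n := by
    apply mul_le_mul_of_nonneg_left key
    positivity
  linarith [h1, hle, hEQ]
end
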